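/- Let r be an odd integer with r ≥ 3 and n ≥ 2, and let W ⊆ 2^{[n]} be a weakly r-separated collection. For an integer i, let T^i := {A ⊆ [n−1] : |A| = i, A ∈ W, and A∪{n} ∈ W}. For j = 0,1,…,n−1, let S^j be the collection of all A ⊆ [n−1] with |A| = j that are unions of at most (r−1)/2 intervals of [n−1], and let A^j be the collection of all A ⊆ [n−1] with |A| = j such that [n−1]∖A is a union of at most (r−1)/2 intervals of [n−1]. Then the collection D^i := T^i ∪ S^{i+1} ∪ S^{i+2} ∪ ⋯ ∪ S^{n−1} ∪ A^0 ∪ A^1 ∪ ⋯ ∪ A^{i−1} is weakly (r−2)-separated. -/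

import Mathlib

open Finset

/-- An alternating sequence for the pair of sets `A`, `B`: a strictly increasing
sequence whose odd-position elements lie in one of `A \ B`, `B \ A` and whose
even-position elements lie in the other. -/
def IsAltSeq (A B : Finset ℕ) {m : ℕ} (f : Fin m → ℕ) : Prop :=
  StrictMono f ∧
    ((∀ j : Fin m, (j : ℕ) % 2 = 0 → f j ∈ A \ B) ∧
        (∀ j : Fin m, (j : ℕ) % 2 = 1 → f j ∈ B \ A) ∨
      (∀ j : Fin m, (j : ℕ) % 2 = 0 → f j ∈ B \ A) ∧
        (∀ j : Fin m, (j : ℕ) % 2 = 1 → f j ∈ A \ B))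

/-- `altLen A B` is the maximum length of an alternating sequence for `A`, `B`. -/
noncomputable def altLen (A B : Finset ℕ) : ℕ :=
  sSup {m : ℕ | ∃ f : Fin m → ℕ, IsAltSeq A B f}

/-- `A` surrounds `B`:  `min (A \ B) < min (B \ A)` and `max (B \ A) < max (A \ B)`. -/
def Surrounds (A B : Finset ℕ) : Prop :=
  (A \ B).min < (B \ A).min ∧ (B \ A).max < (A \ B).max

/-- Weak `r`-separation for an odd `r`. -/
def WeaklySep (r : ℕ) (A B : Finset ℕ) : Prop :=
  altLen A B ≤ r + 2 ∧
    (altLen A B = r + 2 →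
      Surrounds A B ∧ A.card ≤ B.card ∨ Surrounds B A ∧ B.card ≤ A.card)

/-- `X` is a union of at most `k` intervals of `[m]`. -/
def UnionIntervals (m k : ℕ) (X : Finset ℕ) : Prop :=
  ∃ k' ≤ k, ∃ e : Fin k' → ℕ × ℕ,
    (∀ j, 1 ≤ (e j).1 ∧ (e j).1 ≤ (e j).2 ∧ (e j).2 ≤ m) ∧
    X = Finset.univ.sup fun j => Finset.Icc (e j).1 (e j).2

/-- Membership in D^i = T^i ∪ S^{i+1} ∪ ⋯ ∪ S^{n-1} ∪ A^0 ∪ ⋯ ∪ A^{i-1}: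
either A is a twin of level i, or A has level > i and is a union of at most
(r-1)/2 intervals, or A has level < i and its complement in [n-1] is a union
of at most (r-1)/2 intervals. -/
def MemDscr (r n i : ℕ) (W : Finset (Finset ℕ)) (A : Finset ℕ) : Prop :=
  A ⊆ Finset.Icc 1 (n - 1) ∧
    ((A.card = i ∧ A ∈ W ∧ insert n A ∈ W) ∨
      (i < A.card ∧ A.card ≤ n - 1 ∧ UnionIntervals (n - 1) ((r - 1) / 2) A) ∨
      (A.card < i ∧ UnionIntervals (n - 1) ((r - 1) / 2) (Finset.Icc 1 (n - 1) \ A)))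

lemma isAltSeq_zero (A B : Finset ℕ) : IsAltSeq A B (fun _ : Fin 0 => (0:ℕ)) :=
  ⟨fun a => a.elim0, Or.inl ⟨fun j => j.elim0, fun j => j.elim0⟩⟩

lemma altSet_bddAbove (A B : Finset ℕ) :
    BddAbove {m : ℕ | ∃ f : Fin m → ℕ, IsAltSeq A B f} := by
  refine ⟨(A \ B ∪ B \ A).card, ?_⟩
  rintro m ⟨f, hmono, hcl⟩
  have hmem : ∀ j : Fin m, f j ∈ A \ B ∪ B \ A := by
    intro j
    rcases Nat.mod_two_eq_zero_or_one (j : ℕ) with h | h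
    · rcases hcl with ⟨h1, _⟩ | ⟨h1, _⟩
      · exact mem_union_left _ (h1 j h)
      · exact mem_union_right _ (h1 j h)
    · rcases hcl with ⟨_, h2⟩ | ⟨_, h2⟩
      · exact mem_union_right _ (h2 j h)
      · exact mem_union_left _ (h2 j h)
  calc m = (univ : Finset (Fin m)).card := by simp
    _ ≤ _ := card_le_card_of_injOn f (fun j _ => hmem j) hmono.injective.injOn

lemma altSet_nonempty (A B : Finset ℕ) :
    {m : ℕ | ∃ f : Fin m → ℕ, IsAltSeq A B f}.Nonempty :=
  ⟨0, ⟨fun _ => 0, isAltSeq_zero A B⟩⟩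

lemma altLen_spec (A B : Finset ℕ) : ∃ f : Fin (altLen A B) → ℕ, IsAltSeq A B f :=
  Nat.sSup_mem (altSet_nonempty A B) (altSet_bddAbove A B)

lemma le_altLen {A B : Finset ℕ} {m : ℕ} (f : Fin m → ℕ) (hf : IsAltSeq A B f) :
    m ≤ altLen A B := le_csSup (altSet_bddAbove A B) ⟨f, hf⟩

lemma altLen_comm (A B : Finset ℕ) : altLen A B = altLen B A := by
  unfold altLen
  congr 1
  ext m
  constructor <;> rintro ⟨f, hm, hc⟩ <;> exact ⟨f, hm, hc.symm⟩

noncomputable def rext (X : Finset ℕ) (x : ℕ) : ℕ :=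
  if h : (X.filter fun c => x ≤ c ∧ Finset.Icc x c ⊆ X).Nonempty
  then (X.filter fun c => x ≤ c ∧ Finset.Icc x c ⊆ X).max' h else 0

lemma rext_spec {X : Finset ℕ} {x : ℕ} (hx : x ∈ X) :
    rext X x ∈ X ∧ x ≤ rext X x ∧ rext X x + 1 ∉ X ∧ Finset.Icc x (rext X x) ⊆ X := by
  set S := X.filter fun c => x ≤ c ∧ Finset.Icc x c ⊆ X with hS
  have hxS : x ∈ S := by
    simp only [hS, mem_filter]
    refine ⟨hx, le_refl x, ?_⟩
    intro y hy
    rw [mem_Icc] at hy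
    have : y = x := le_antisymm hy.2 hy.1
    rwa [this]
  have hne : S.Nonempty := ⟨x, hxS⟩
  have hr : rext X x = S.max' hne := by rw [rext, dif_pos hne]
  have hmem : rext X x ∈ S := hr ▸ S.max'_mem hne
  simp only [hS, mem_filter] at hmem
  refine ⟨hmem.1, hmem.2.1, ?_, hmem.2.2⟩
  intro hcl
  have h1 : rext X x + 1 ∈ S := by
    simp only [hS, mem_filter]
    refine ⟨hcl, by omega, ?_⟩
    intro y hy
    rw [mem_Icc] at hy
    rcases Nat.lt_or_ge y (rext X x + 1) with h | h
    · exact hmem.2.2 (mem_Icc.2 ⟨hy.1, by omega⟩)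
    · have hy1 : y = rext X x + 1 := by omega
      rwa [hy1]
  have h2 := S.le_max' _ h1
  rw [← hr] at h2
  omega

lemma rext_lt {X : Finset ℕ} {x z : ℕ} (hx : x ∈ X) (hz : z ∉ X) (hxz : x ≤ z) :
    rext X x < z := by
  by_contra h
  push_neg at h
  exact hz ((rext_spec hx).2.2.2 (mem_Icc.2 ⟨hxz, h⟩))

lemma alt_bound {m0 k : ℕ} {X : Finset ℕ} (hX : UnionIntervals m0 k X)
    {m : ℕ} {f : Fin m → ℕ} (hf : StrictMono f) {p : ℕ} (hp : p < 2)
    (halt : ∀ j : Fin m, f j ∈ X ↔ (j : ℕ) % 2 = p) : m ≤ 2 * k + p := by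
  obtain ⟨k', hk', e, _, hXe⟩ := hX
  set RB := X.filter (fun c => c + 1 ∉ X) with hRB
  have hRBcard : RB.card ≤ k' := by
    have hsub : RB ⊆ (univ : Finset (Fin k')).image (fun t => (e t).2) := by
      intro c hc
      simp only [hRB, mem_filter] at hc
      obtain ⟨hcX, hc1⟩ := hc
      rw [hXe, Finset.mem_sup] at hcX
      obtain ⟨t, -, ht⟩ := hcX
      rw [mem_Icc] at ht
      have hceq : c = (e t).2 := by
        rcases Nat.lt_or_ge c (e t).2 with h | h
        · exfalso
          apply hc1
          rw [hXe, Finset.mem_sup]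
          exact ⟨t, mem_univ t, mem_Icc.2 ⟨by omega, by omega⟩⟩
        · omega
      rw [mem_image]
      exact ⟨t, mem_univ t, hceq.symm⟩
    calc RB.card ≤ _ := card_le_card hsub
      _ ≤ (univ : Finset (Fin k')).card := card_image_le
      _ = k' := by simp
  set P := (univ : Finset (Fin m)).filter (fun j : Fin m => (j : ℕ) % 2 = p) with hP
  have hPX : ∀ j ∈ P, f j ∈ X := by
    intro j hj
    rw [hP, mem_filter] at hj
    exact (halt j).2 hj.2
  have hPcard : P.card ≤ RB.card := by
    apply Finset.card_le_card_of_injOn (fun j => rext X (f j))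
    · intro j hj
      have := rext_spec (hPX j hj)
      simp only [hRB, Finset.mem_coe, mem_filter]
      exact ⟨this.1, this.2.2.1⟩
    · have key : ∀ j j' : Fin m, j ∈ P → j' ∈ P → j < j' →
          rext X (f j) < rext X (f j') := by
        intro j j' hj hj' hlt
        have hjP := hj; have hj'P := hj'
        rw [hP, mem_filter] at hjP hj'P
        have hvlt : (j : ℕ) < (j' : ℕ) := hlt
        have hj1 : (j : ℕ) + 1 < m := by have := j'.isLt; omega
        have hj1X : f ⟨(j : ℕ) + 1, hj1⟩ ∉ X := by
          rw [halt]
          have hv : ((⟨(j : ℕ) + 1, hj1⟩ : Fin m) : ℕ) = (j : ℕ) + 1 := rfl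
          rw [hv]
          have := hjP.2
          omega
        have h1 : rext X (f j) < f ⟨(j : ℕ) + 1, hj1⟩ :=
          rext_lt (hPX j hj) hj1X
            (le_of_lt (hf (show j < ⟨(j : ℕ) + 1, hj1⟩ by rw [Fin.lt_def]; exact Nat.lt_succ_self _)))
        have h2 : f ⟨(j : ℕ) + 1, hj1⟩ ≤ f j' := by
          apply hf.monotone
          rw [Fin.le_def]
          exact hvlt
        have h3 := (rext_spec (hPX j' hj')).2.1
        omega
      intro j hj j' hj' heq
      rw [Finset.mem_coe] at hj hj'
      by_contra hne
      rcases lt_or_gt_of_ne hne with h | h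
      · exact absurd heq (ne_of_lt (key j j' hj hj' h))
      · exact absurd heq.symm (ne_of_lt (key j' j hj' hj h))
  have hlow : (m + 1 - p) / 2 ≤ P.card := by
    have himg : (Finset.range ((m + 1 - p) / 2)).card ≤ (P.image Fin.val).card := by
      apply Finset.card_le_card_of_injOn (fun j => 2 * j + p)
      · intro j hj
        rw [Finset.mem_coe, Finset.mem_range] at hj
        have hjm : 2 * j + p < m := by omega
        rw [Finset.mem_coe, Finset.mem_image]
        refine ⟨⟨2 * j + p, hjm⟩, ?_, rfl⟩
        rw [hP, mem_filter]
        refine ⟨mem_univ _, ?_⟩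
        have hv : ((⟨2 * j + p, hjm⟩ : Fin m) : ℕ) = 2 * j + p := rfl
        rw [hv]
        omega
      · intro a _ b _ hab
        simp only at hab
        omega
    rwa [Finset.card_image_of_injective _ Fin.val_injective, Finset.card_range] at himg
  omega

lemma halt_of {X : Finset ℕ} {m : ℕ} {f : Fin m → ℕ} {P Q : Finset ℕ}
    (hP : P ⊆ X) (hQ : ∀ x ∈ Q, x ∉ X)
    (h1 : ∀ j : Fin m, (j : ℕ) % 2 = 0 → f j ∈ P)
    (h2 : ∀ j : Fin m, (j : ℕ) % 2 = 1 → f j ∈ Q) :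
    ∀ j : Fin m, f j ∈ X ↔ (j : ℕ) % 2 = 0 := by
  intro j
  constructor
  · intro hj
    rcases Nat.mod_two_eq_zero_or_one (j : ℕ) with h | h
    · exact h
    · exact absurd hj (hQ _ (h2 j h))
  · intro h
    exact hP (h1 j h)

lemma halt_of' {X : Finset ℕ} {m : ℕ} {f : Fin m → ℕ} {P Q : Finset ℕ}
    (hP : ∀ x ∈ P, x ∉ X) (hQ : Q ⊆ X)
    (h1 : ∀ j : Fin m, (j : ℕ) % 2 = 0 → f j ∈ P)
    (h2 : ∀ j : Fin m, (j : ℕ) % 2 = 1 → f j ∈ Q) :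
    ∀ j : Fin m, f j ∈ X ↔ (j : ℕ) % 2 = 1 := by
  intro j
  constructor
  · intro hj
    rcases Nat.mod_two_eq_zero_or_one (j : ℕ) with h | h
    · exact absurd hj (hP _ (h1 j h))
    · exact h
  · intro h
    exact hQ (h2 j h)

set_option maxHeartbeats 1000000 in
lemma surrounds_of_seq {A B : Finset ℕ} {m : ℕ} (hm : 3 ≤ m) (hmo : m % 2 = 1)
    {f : Fin m → ℕ} (hmono : StrictMono f)
    (h1 : ∀ j : Fin m, (j : ℕ) % 2 = 0 → f j ∈ A \ B)
    (h2 : ∀ j : Fin m, (j : ℕ) % 2 = 1 → f j ∈ B \ A)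
    (hmax : altLen A B ≤ m) : Surrounds A B := by
  have h0m : 0 < m := by omega
  set j0 : Fin m := ⟨0, h0m⟩ with hj0
  set jl : Fin m := ⟨m - 1, by omega⟩ with hjl
  have hf0 : f j0 ∈ A \ B := h1 j0 (by show (0 : ℕ) % 2 = 0; rfl)
  have hfl : f jl ∈ A \ B := h1 jl (by show (m - 1) % 2 = 0; omega)
  have hlow : ∀ b ∈ B \ A, f j0 < b := by
    intro b hb
    by_contra hle
    push_neg at hle
    have hbne : b ≠ f j0 := by
      intro h
      rw [h, mem_sdiff] at hb
      rw [mem_sdiff] at hf0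
      exact hb.2 hf0.1
    have hblt : b < f j0 := lt_of_le_of_ne hle hbne
    set g : Fin (m + 1) → ℕ :=
      fun j => if h : (j : ℕ) = 0 then b else f ⟨(j : ℕ) - 1, by omega⟩ with hg
    have hmono' : StrictMono g := by
      intro a c hac
      have hac' : (a : ℕ) < (c : ℕ) := hac
      simp only [hg]
      rcases Nat.eq_zero_or_pos (a : ℕ) with ha | ha
      · rw [dif_pos ha, dif_neg (by omega)]
        calc b < f j0 := hblt
          _ ≤ f ⟨(c : ℕ) - 1, by omega⟩ := hmono.monotone (by rw [Fin.le_def]; exact Nat.zero_le _)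
      · rw [dif_neg (by omega), dif_neg (by omega)]
        apply hmono
        rw [Fin.lt_def]
        show (a : ℕ) - 1 < (c : ℕ) - 1
        omega
    have hseq : IsAltSeq A B g := by
      refine ⟨hmono', Or.inr ⟨?_, ?_⟩⟩
      · intro j hj
        simp only [hg]
        rcases Nat.eq_zero_or_pos (j : ℕ) with h | h
        · rw [dif_pos h]; exact hb
        · rw [dif_neg (by omega)]
          exact h2 _ (by show ((j : ℕ) - 1) % 2 = 1; omega)
      · intro j hj
        simp only [hg]
        rw [dif_neg (by omega)]
        exact h1 _ (by show ((j : ℕ) - 1) % 2 = 0; omega)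
    have := le_altLen g hseq
    omega
  have hhigh : ∀ b ∈ B \ A, b < f jl := by
    intro b hb
    by_contra hle
    push_neg at hle
    have hbne : b ≠ f jl := by
      intro h
      rw [h, mem_sdiff] at hb
      rw [mem_sdiff] at hfl
      exact hb.2 hfl.1
    have hblt : f jl < b := lt_of_le_of_ne hle (Ne.symm hbne)
    set g : Fin (m + 1) → ℕ :=
      fun j => if h : (j : ℕ) < m then f ⟨(j : ℕ), h⟩ else b with hg
    have hfleb : ∀ j : Fin m, f j ≤ f jl := by
      intro j
      apply hmono.monotone
      rw [Fin.le_def]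
      show (j : ℕ) ≤ m - 1
      have := j.isLt
      omega
    have hmono' : StrictMono g := by
      intro a c hac
      have hac' : (a : ℕ) < (c : ℕ) := hac
      simp only [hg]
      by_cases hc : (c : ℕ) < m
      · rw [dif_pos (by omega), dif_pos hc]
        apply hmono
        rw [Fin.lt_def]
        exact hac'
      · rw [dif_pos (by have := c.isLt; omega), dif_neg hc]
        calc f _ ≤ f jl := hfleb _
          _ < b := hblt
    have hseq : IsAltSeq A B g := by
      refine ⟨hmono', Or.inl ⟨?_, ?_⟩⟩
      · intro j hj
        have hjm : (j : ℕ) < m := by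
          have := j.isLt
          rcases Nat.lt_or_ge (j : ℕ) m with h | h
          · exact h
          · exfalso; have : (j : ℕ) = m := by omega
            omega
        simp only [hg]
        rw [dif_pos hjm]
        exact h1 _ hj
      · intro j hj
        by_cases hjm : (j : ℕ) < m
        · simp only [hg]
          rw [dif_pos hjm]
          exact h2 _ hj
        · simp only [hg]
          rw [dif_neg hjm]
          exact hb
    have := le_altLen g hseq
    omega
  have hBAne : (B \ A).Nonempty := ⟨f ⟨1, by omega⟩, h2 _ (by show (1 : ℕ) % 2 = 1; rfl)⟩
  constructor
  · calc (A \ B).min ≤ (f j0 : WithTop ℕ) := Finset.min_le hf0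
      _ < (((B \ A).min' hBAne : ℕ) : WithTop ℕ) :=
          WithTop.coe_lt_coe.2 (hlow _ (Finset.min'_mem _ _))
      _ = (B \ A).min := Finset.coe_min' hBAne
  · calc (B \ A).max = (((B \ A).max' hBAne : ℕ) : WithBot ℕ) := (Finset.coe_max' hBAne).symm
      _ < (f jl : WithBot ℕ) := WithBot.coe_lt_coe.2 (hhigh _ (Finset.max'_mem _ _))
      _ ≤ (A \ B).max := Finset.le_max hfl

set_option maxHeartbeats 1000000 in
lemma ext_contra {r n : ℕ} (hro : r % 2 = 1) (hn : 1 ≤ n) {A B : Finset ℕ}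
    (hA : A ⊆ Finset.Icc 1 (n - 1)) (hB : B ⊆ Finset.Icc 1 (n - 1))
    (hcard : B.card ≤ A.card)
    (hsep : WeaklySep r (insert n A) B)
    {g : Fin (r + 1) → ℕ} (hmono : StrictMono g)
    (h1 : ∀ j : Fin (r + 1), (j : ℕ) % 2 = 0 → g j ∈ A \ B)
    (h2 : ∀ j : Fin (r + 1), (j : ℕ) % 2 = 1 → g j ∈ B \ A) : False := by
  have hnA : n ∉ A := by
    intro h
    have := hA h
    rw [mem_Icc] at this
    omega
  have hnB : n ∉ B := by
    intro h
    have := hB h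
    rw [mem_Icc] at this
    omega
  have hgle : ∀ j : Fin (r + 1), g j < n := by
    intro j
    rcases Nat.mod_two_eq_zero_or_one (j : ℕ) with h | h
    · have := hA (mem_sdiff.1 (h1 j h)).1
      rw [mem_Icc] at this
      omega
    · have := hB (mem_sdiff.1 (h2 j h)).1
      rw [mem_Icc] at this
      omega
  set A' := insert n A with hA'
  set h : Fin (r + 2) → ℕ :=
    fun j => if hj : (j : ℕ) < r + 1 then g ⟨(j : ℕ), hj⟩ else n with hh
  have hmono' : StrictMono h := by
    intro a c hac
    have hac' : (a : ℕ) < (c : ℕ) := hac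
    simp only [hh]
    by_cases hc : (c : ℕ) < r + 1
    · rw [dif_pos (by omega), dif_pos hc]
      apply hmono
      rw [Fin.lt_def]
      exact hac'
    · rw [dif_pos (by have := c.isLt; omega), dif_neg hc]
      exact hgle _
  have hseq : IsAltSeq A' B h := by
    refine ⟨hmono', Or.inl ⟨?_, ?_⟩⟩
    · intro j hj
      by_cases hjr : (j : ℕ) < r + 1
      · simp only [hh]
        rw [dif_pos hjr]
        have hm := h1 ⟨(j : ℕ), hjr⟩ hj
        rw [mem_sdiff] at hm ⊢
        exact ⟨mem_insert_of_mem hm.1, hm.2⟩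
      · simp only [hh]
        rw [dif_neg hjr]
        rw [mem_sdiff]
        exact ⟨mem_insert_self n A, hnB⟩
    · intro j hj
      have hjr : (j : ℕ) < r + 1 := by
        have := j.isLt
        rcases Nat.lt_or_ge (j : ℕ) (r + 1) with h' | h'
        · exact h'
        · exfalso; omega
      simp only [hh]
      rw [dif_pos hjr]
      have hm := h2 ⟨(j : ℕ), hjr⟩ hj
      rw [mem_sdiff] at hm ⊢
      refine ⟨hm.1, ?_⟩
      rw [hA', mem_insert]
      rintro (h' | h')
      · have := hgle ⟨(j : ℕ), hjr⟩
        omega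
      · exact hm.2 h'
  have hge := le_altLen h hseq
  have heq : altLen A' B = r + 2 := le_antisymm hsep.1 hge
  rcases hsep.2 heq with ⟨_, hc⟩ | ⟨hsur, _⟩
  · have hcA' : A'.card = A.card + 1 := card_insert_of_notMem hnA
    omega
  · have hmax1 : ((n : ℕ) : WithBot ℕ) ≤ (A' \ B).max :=
      Finset.le_max (mem_sdiff.2 ⟨mem_insert_self n A, hnB⟩)
    have hmax2 : (B \ A').max ≤ ((n - 1 : ℕ) : WithBot ℕ) :=
      Finset.max_le (fun b hb => by
        have := hB (mem_sdiff.1 hb).1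
        rw [mem_Icc] at this
        exact WithBot.coe_le_coe.2 this.2)
    have hlt := hsur.2
    have : ((n : ℕ) : WithBot ℕ) ≤ ((n - 1 : ℕ) : WithBot ℕ) :=
      le_trans hmax1 (le_trans (le_of_lt hlt) hmax2)
    have h2 : n ≤ n - 1 := by exact_mod_cast this
    omega

lemma altLen_TT {r n : ℕ} (hro : r % 2 = 1) (hn : 1 ≤ n)
    {W : Finset (Finset ℕ)} (hWsep : ∀ A ∈ W, ∀ B ∈ W, WeaklySep r A B)
    {A B : Finset ℕ} (hA : A ⊆ Finset.Icc 1 (n - 1)) (hB : B ⊆ Finset.Icc 1 (n - 1))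
    (hcard : A.card = B.card)
    (hAW : A ∈ W) (hA'W : insert n A ∈ W) (hBW : B ∈ W) (hB'W : insert n B ∈ W) :
    altLen A B ≤ r := by
  by_contra hgt
  push_neg at hgt
  have hle : r + 1 ≤ altLen A B := hgt
  obtain ⟨F, hF⟩ := altLen_spec A B
  set g : Fin (r + 1) → ℕ := fun j => F (Fin.castLE hle j) with hg
  have hmono : StrictMono g := by
    intro a b hab
    apply hF.1
    rw [Fin.lt_def]
    exact hab
  rcases hF.2 with ⟨h1, h2⟩ | ⟨h1, h2⟩
  · exact ext_contra hro hn hA hB hcard.ge (hWsep _ hA'W _ hBW) hmono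
      (fun j hj => h1 _ (by simpa using hj)) (fun j hj => h2 _ (by simpa using hj))
  · exact ext_contra hro hn hB hA hcard.le (hWsep _ hB'W _ hAW) hmono
      (fun j hj => h1 _ (by simpa using hj)) (fun j hj => h2 _ (by simpa using hj))

set_option maxHeartbeats 1000000 in
/-- (Claim 2) the collection D^i is weakly (r-2)-separated. -/
theorem Dscr_weaklySep (r n : ℕ) (hr : Odd r) (hr3 : 3 ≤ r) (hn : 2 ≤ n)
    (W : Finset (Finset ℕ)) (hWsub : ∀ A ∈ W, A ⊆ Finset.Icc 1 n)
    (hWsep : ∀ A ∈ W, ∀ B ∈ W, WeaklySep r A B) (i : ℕ) :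
    ∀ A B : Finset ℕ, MemDscr r n i W A → MemDscr r n i W B →
      WeaklySep (r - 2) A B := by
  intro A B hA hB
  obtain ⟨hAsub, hAcase⟩ := hA
  obtain ⟨hBsub, hBcase⟩ := hB
  obtain ⟨t, ht⟩ := hr
  have hro : r % 2 = 1 := by omega
  set k := (r - 1) / 2 with hk
  have hrk : r = 2 * k + 1 := by omega
  have hn1 : 1 ≤ n := by omega
  have h22 : r - 2 + 2 = r := by omega
  -- generic bounds
  have boundS : ∀ C D : Finset ℕ, UnionIntervals (n - 1) k C → altLen C D ≤ r := by
    intro C D hU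
    apply csSup_le (altSet_nonempty C D)
    rintro m ⟨f, hmono, hcl⟩
    rcases hcl with ⟨h1, h2⟩ | ⟨h1, h2⟩
    · have halt := halt_of (X := C) sdiff_subset (fun x hx => (mem_sdiff.1 hx).2) h1 h2
      have := alt_bound hU hmono (by omega : (0 : ℕ) < 2) halt
      omega
    · have halt := halt_of' (X := C) (fun x hx => (mem_sdiff.1 hx).2) sdiff_subset h1 h2
      have := alt_bound hU hmono (by omega : (1 : ℕ) < 2) halt
      omega
  have boundC : ∀ C D : Finset ℕ, C ⊆ Finset.Icc 1 (n - 1) → D ⊆ Finset.Icc 1 (n - 1) →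
      UnionIntervals (n - 1) k (Finset.Icc 1 (n - 1) \ C) → altLen C D ≤ r := by
    intro C D hC hD hU
    apply csSup_le (altSet_nonempty C D)
    rintro m ⟨f, hmono, hcl⟩
    have hsub : D \ C ⊆ Finset.Icc 1 (n - 1) \ C := fun x hx =>
      mem_sdiff.2 ⟨hD (mem_sdiff.1 hx).1, (mem_sdiff.1 hx).2⟩
    have hdis : ∀ x ∈ C \ D, x ∉ Finset.Icc 1 (n - 1) \ C := fun x hx h' =>
      (mem_sdiff.1 h').2 (mem_sdiff.1 hx).1
    rcases hcl with ⟨h1, h2⟩ | ⟨h1, h2⟩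
    · have halt := halt_of' (X := Finset.Icc 1 (n - 1) \ C) hdis hsub h1 h2
      have := alt_bound hU hmono (by omega : (1 : ℕ) < 2) halt
      omega
    · have halt := halt_of (X := Finset.Icc 1 (n - 1) \ C) hsub hdis h1 h2
      have := alt_bound hU hmono (by omega : (0 : ℕ) < 2) halt
      omega
  have hle : altLen A B ≤ r := by
    rcases hAcase with hT | hS | hC
    · rcases hBcase with hT' | hS' | hC'
      · exact altLen_TT hro hn1 hWsep hAsub hBsub (hT.1.trans hT'.1.symm)
          hT.2.1 hT.2.2 hT'.2.1 hT'.2.2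
      · rw [altLen_comm]
        exact boundS B A hS'.2.2
      · rw [altLen_comm]
        exact boundC B A hBsub hAsub hC'.2
    · exact boundS A B hS.2.2
    · exact boundC A B hAsub hBsub hC.2
  constructor
  · rw [h22]; exact hle
  rw [h22]
  intro heq
  obtain ⟨f, hmono, hcl⟩ : ∃ f : Fin r → ℕ, IsAltSeq A B f := by
    rw [← heq]; exact altLen_spec A B
  rcases hcl with ⟨h1, h2⟩ | ⟨h1, h2⟩
  · -- endpoints in A \ B : Surrounds A B, need card A ≤ card B
    left
    refine ⟨surrounds_of_seq hr3 hro hmono h1 h2 heq.le, ?_⟩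
    have hAnotS : ¬ UnionIntervals (n - 1) k A := by
      intro hU
      have halt := halt_of (X := A) sdiff_subset (fun x hx => (mem_sdiff.1 hx).2) h1 h2
      have := alt_bound hU hmono (by omega : (0 : ℕ) < 2) halt
      omega
    have hBnotC : ¬ UnionIntervals (n - 1) k (Finset.Icc 1 (n - 1) \ B) := by
      intro hU
      have hsub : A \ B ⊆ Finset.Icc 1 (n - 1) \ B := fun x hx =>
        mem_sdiff.2 ⟨hAsub (mem_sdiff.1 hx).1, (mem_sdiff.1 hx).2⟩
      have hdis : ∀ x ∈ B \ A, x ∉ Finset.Icc 1 (n - 1) \ B := fun x hx h' =>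
        (mem_sdiff.1 h').2 (mem_sdiff.1 hx).1
      have halt := halt_of (X := Finset.Icc 1 (n - 1) \ B) hsub hdis h1 h2
      have := alt_bound hU hmono (by omega : (0 : ℕ) < 2) halt
      omega
    rcases hAcase with hT | hS | hC
    · rcases hBcase with hT' | hS' | hC'
      · omega
      · omega
      · exact absurd hC'.2 hBnotC
    · exact absurd hS.2.2 hAnotS
    · rcases hBcase with hT' | hS' | hC'
      · omega
      · omega
      · exact absurd hC'.2 hBnotC
  · -- endpoints in B \ A : Surrounds B A, need card B ≤ card A
    right
    have hmaxBA : altLen B A ≤ r := by rw [altLen_comm]; exact heq.le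
    refine ⟨surrounds_of_seq hr3 hro hmono h1 h2 hmaxBA, ?_⟩
    have hBnotS : ¬ UnionIntervals (n - 1) k B := by
      intro hU
      have halt := halt_of (X := B) sdiff_subset (fun x hx => (mem_sdiff.1 hx).2) h1 h2
      have := alt_bound hU hmono (by omega : (0 : ℕ) < 2) halt
      omega
    have hAnotC : ¬ UnionIntervals (n - 1) k (Finset.Icc 1 (n - 1) \ A) := by
      intro hU
      have hsub : B \ A ⊆ Finset.Icc 1 (n - 1) \ A := fun x hx =>
        mem_sdiff.2 ⟨hBsub (mem_sdiff.1 hx).1, (mem_sdiff.1 hx).2⟩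
      have hdis : ∀ x ∈ A \ B, x ∉ Finset.Icc 1 (n - 1) \ A := fun x hx h' =>
        (mem_sdiff.1 h').2 (mem_sdiff.1 hx).1
      have halt := halt_of (X := Finset.Icc 1 (n - 1) \ A) hsub hdis h1 h2
      have := alt_bound hU hmono (by omega : (0 : ℕ) < 2) halt
      omega
    rcases hAcase with hT | hS | hC
    · rcases hBcase with hT' | hS' | hC'
      · omega
      · exact absurd hS'.2.2 hBnotS
      · omega
    · rcases hBcase with hT' | hS' | hC'
      · omega
      · exact absurd hS'.2.2 hBnotS
      · omega
    · exact absurd hC.2 hAnotC
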